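/- arXiv:2112.07234 — 8 statements merged into one kernel-verified Lean document; each statement's English description precedes it below -/
import Mathlib

section
/- Assume s γ₃ γ₄ > γ₂, s < γ₃, and β < 1. Then 0 < X₂ < X₃, and the three points 0, X₂, X₃ are equilibria of the deterministic model: F(0) = 0, F(X₂) = 0, and F(X₃) = 0. -/
/-- Assume `s γ₃ γ₄ > γ₂`, `s < γ₃` and `β < 1`. Then `0 < X₂ < X₃` and the three points
`0`, `X₂`, `X₃` are equilibria of the deterministic model:
`F(0) = 0`, `F(X₂) = 0` and `F(X₃) = 0`. -/
theorem three_equilibria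
    (s γ₂ γ₃ γ₄ : ℝ) (hs : 0 < s) (h2 : 0 < γ₂) (h3 : 0 < γ₃) (h4 : 0 < γ₄)
    (F : ℝ → ℝ)
    (hF : ∀ x, F x = x * (s - γ₂ * x - γ₃ / (γ₃ * γ₄ * x + 1)))
    (β X₂ X₃ : ℝ)
    (hβ : β = 4 * γ₂ * γ₃ * γ₄ * (γ₃ - s) / (s * γ₃ * γ₄ - γ₂) ^ 2)
    (hX₂ : X₂ = (s * γ₃ * γ₄ - γ₂) * (1 - Real.sqrt (1 - β)) / (2 * γ₂ * γ₃ * γ₄))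
    (hX₃ : X₃ = (s * γ₃ * γ₄ - γ₂) * (1 + Real.sqrt (1 - β)) / (2 * γ₂ * γ₃ * γ₄))
    (hgt : s * γ₃ * γ₄ > γ₂) (hsγ₃ : s < γ₃) (hβ1 : β < 1) :
    0 < X₂ ∧ X₂ < X₃ ∧ F 0 = 0 ∧ F X₂ = 0 ∧ F X₃ = 0 := by
  set d := Real.sqrt (1 - β) with hd
  have hA : 0 < s * γ₃ * γ₄ - γ₂ := by linarith
  have hβ0 : 0 < β := by
    rw [hβ]
    exact div_pos (mul_pos (by positivity) (by linarith)) (by positivity)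
  have hd0 : 0 ≤ d := Real.sqrt_nonneg _
  have hd2 : d ^ 2 = 1 - β := Real.sq_sqrt (by linarith)
  have hdpos : 0 < d := Real.sqrt_pos.2 (by linarith)
  have hd1 : d < 1 := by nlinarith
  have hc : 0 < 2 * γ₂ * γ₃ * γ₄ := by positivity
  have hX2pos : 0 < X₂ := by
    rw [hX₂]
    apply div_pos _ hc
    apply mul_pos hA
    linarith
  have hX3pos : 0 < X₃ := by
    rw [hX₃]
    apply div_pos _ hc
    apply mul_pos hA
    linarith
  have hlt : X₂ < X₃ := by
    rw [hX₂, hX₃, div_lt_div_iff₀ hc hc]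
    nlinarith [mul_pos (mul_pos hA hdpos) hc]
  -- key: β * A^2 = 4γ₂γ₃γ₄(γ₃ - s)
  have hβA : β * (s * γ₃ * γ₄ - γ₂) ^ 2 = 4 * γ₂ * γ₃ * γ₄ * (γ₃ - s) := by
    rw [hβ, div_mul_cancel₀ _ (pow_ne_zero 2 hA.ne')]
  have key : ∀ X : ℝ, 0 < X →
      γ₂ * γ₃ * γ₄ * X ^ 2 - (s * γ₃ * γ₄ - γ₂) * X + (γ₃ - s) = 0 → F X = 0 := by
    intro X hX hq
    rw [hF]
    have hden : γ₃ * γ₄ * X + 1 ≠ 0 := by positivity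
    have : s - γ₂ * X - γ₃ / (γ₃ * γ₄ * X + 1) = 0 := by
      field_simp
      nlinarith [hq]
    rw [this, mul_zero]
  refine ⟨hX2pos, hlt, ?_, ?_, ?_⟩
  · rw [hF]; ring
  all_goals {
    first
    | apply key _ hX2pos
    | apply key _ hX3pos
    have h1 : γ₃ - s = (1 - d ^ 2) * (s * γ₃ * γ₄ - γ₂) ^ 2 / (4 * (γ₂ * γ₃ * γ₄)) := by
      rw [hd2]
      rw [show 1 - (1 - β) = β by ring]
      field_simp
      linarith [hβA]
    first
    | rw [hX₂, h1]
    | rw [hX₃, h1]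
    field_simp
    ring }
end

section
/- Assume s γ₃ γ₄ > γ₂ and 4 γ₂ γ₃ γ₄ (γ₃ − s) = (s γ₃ γ₄ − γ₂)² (i.e. β = 1). Then for every x ≥ 0, F(x) = 0 if and only if x = 0 or x = X₄; that is, at β = 1 the model has exactly the two equilibrium states 0 and X₄ = (s γ₃ γ₄ − γ₂)/(2 γ₂ γ₃ γ₄). -/
/-- Assume `s γ₃ γ₄ > γ₂` and `4 γ₂ γ₃ γ₄ (γ₃ - s) = (s γ₃ γ₄ - γ₂)²` (i.e. `β = 1`).
Then for every `x ≥ 0`, `F(x) = 0` iff `x = 0` or `x = X₄`: at `β = 1` the model has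
exactly the two equilibrium states `0` and `X₄ = (s γ₃ γ₄ - γ₂)/(2 γ₂ γ₃ γ₄)`. -/
theorem two_equilibria_at_bifurcation
    (s γ₂ γ₃ γ₄ : ℝ) (hs : 0 < s) (h2 : 0 < γ₂) (h3 : 0 < γ₃) (h4 : 0 < γ₄)
    (F : ℝ → ℝ)
    (hF : ∀ x, F x = x * (s - γ₂ * x - γ₃ / (γ₃ * γ₄ * x + 1)))
    (X₄ : ℝ)
    (hX₄ : X₄ = (s * γ₃ * γ₄ - γ₂) / (2 * γ₂ * γ₃ * γ₄))
    (hgt : s * γ₃ * γ₄ > γ₂)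
    (hβ1 : 4 * γ₂ * γ₃ * γ₄ * (γ₃ - s) = (s * γ₃ * γ₄ - γ₂) ^ 2) :
    ∀ x : ℝ, 0 ≤ x → (F x = 0 ↔ x = 0 ∨ x = X₄) := by
  intro x hx
  have hd : (0:ℝ) < γ₃ * γ₄ * x + 1 := by positivity
  have hd' : γ₃ * γ₄ * x + 1 ≠ 0 := ne_of_gt hd
  have hden : (2 * γ₂ * γ₃ * γ₄ : ℝ) ≠ 0 := by positivity
  have hq : γ₂ * γ₃ * γ₄ * (x - X₄) ^ 2
      = -((s - γ₂ * x) * (γ₃ * γ₄ * x + 1) - γ₃) := by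
    rw [hX₄]
    field_simp
    linear_combination (-1) * hβ1
  rw [hF]
  constructor
  · intro h
    have h' : x * (((s - γ₂ * x) * (γ₃ * γ₄ * x + 1) - γ₃) / (γ₃ * γ₄ * x + 1)) = 0 := by
      rw [← h]; congr 1; field_simp
    rcases mul_eq_zero.mp h' with h0 | h1
    · exact Or.inl h0
    · right
      have hnum : (s - γ₂ * x) * (γ₃ * γ₄ * x + 1) - γ₃ = 0 :=
        (div_eq_zero_iff.mp h1).resolve_right hd'
      have : γ₂ * γ₃ * γ₄ * (x - X₄) ^ 2 = 0 := by rw [hq, hnum]; ring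
      have hsq : (x - X₄) ^ 2 = 0 := by
        have hpos : (0:ℝ) < γ₂ * γ₃ * γ₄ := by positivity
        exact by nlinarith [sq_nonneg (x - X₄)]
      have := pow_eq_zero_iff (n := 2) (by norm_num) |>.mp hsq
      linarith
  · rintro (rfl | he)
    · ring
    · have hnum : (s - γ₂ * x) * (γ₃ * γ₄ * x + 1) - γ₃ = 0 := by
        have h0 : γ₂ * γ₃ * γ₄ * (x - X₄) ^ 2 = 0 := by rw [he]; ring
        linarith [hq.symm.trans h0]
      have h1 : s - γ₂ * x - γ₃ / (γ₃ * γ₄ * x + 1) = 0 := by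
        rw [sub_eq_zero, eq_div_iff hd']
        linarith [hnum]
      rw [h1, mul_zero]
end

section
/- Assume 4 γ₂ γ₃ γ₄ (γ₃ − s) > (s γ₃ γ₄ − γ₂)² (i.e. β > 1). Then F(x) < 0 for every x > 0; in particular x = 0 is the unique nonnegative equilibrium of the deterministic model. -/
/-- Assume `4 γ₂ γ₃ γ₄ (γ₃ - s) > (s γ₃ γ₄ - γ₂)²` (i.e. `β > 1`). Then `F(x) < 0`
for every `x > 0`; in particular `x = 0` is the unique nonnegative equilibrium of the
deterministic model. -/
theorem extinction_only_equilibrium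
    (s γ₂ γ₃ γ₄ : ℝ) (hs : 0 < s) (h2 : 0 < γ₂) (h3 : 0 < γ₃) (h4 : 0 < γ₄)
    (F : ℝ → ℝ)
    (hF : ∀ x, F x = x * (s - γ₂ * x - γ₃ / (γ₃ * γ₄ * x + 1)))
    (hβ1 : 4 * γ₂ * γ₃ * γ₄ * (γ₃ - s) > (s * γ₃ * γ₄ - γ₂) ^ 2) :
    (∀ x : ℝ, 0 < x → F x < 0) ∧ (∀ x : ℝ, 0 ≤ x → (F x = 0 ↔ x = 0)) := by
  have key : ∀ x : ℝ, 0 < x → F x < 0 := by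
    intro x hx
    have hD : (0:ℝ) < γ₃ * γ₄ * x + 1 := by positivity
    rw [hF]
    have h1 : s - γ₂ * x - γ₃ / (γ₃ * γ₄ * x + 1) < 0 := by
      have : s - γ₂ * x < γ₃ / (γ₃ * γ₄ * x + 1) := by
        rw [lt_div_iff₀ hD]
        nlinarith [sq_nonneg (2 * (γ₂ * γ₃ * γ₄) * x - (s * γ₃ * γ₄ - γ₂)),
          mul_pos (mul_pos h2 h3) h4]
      linarith
    exact mul_neg_of_pos_of_neg hx h1
  refine ⟨key, fun x hx => ?_⟩
  constructor
  · intro hFx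
    rcases hx.eq_or_lt with h | h
    · exact h.symm
    · exact absurd hFx (key x h).ne
  · intro h; subst h; rw [hF]; ring
end

section
/- Assume s γ₃ γ₄ > γ₂, s < γ₃, and β < 1. Then the phase line of the deterministic model has the bistable sign pattern: F(x) < 0 for all x in the open interval (0, X₂), F(x) > 0 for all x in (X₂, X₃), and F(x) < 0 for all x > X₃. -/
set_option maxHeartbeats 1000000 in
/-- Assume `s γ₃ γ₄ > γ₂`, `s < γ₃` and `β < 1`. Then the phase line of the deterministic
model has the bistable sign pattern: `F(x) < 0` on `(0, X₂)`, `F(x) > 0` on `(X₂, X₃)`,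
and `F(x) < 0` for all `x > X₃`. -/
theorem bistable_sign_pattern
    (s γ₂ γ₃ γ₄ : ℝ) (hs : 0 < s) (h2 : 0 < γ₂) (h3 : 0 < γ₃) (h4 : 0 < γ₄)
    (F : ℝ → ℝ)
    (hF : ∀ x, F x = x * (s - γ₂ * x - γ₃ / (γ₃ * γ₄ * x + 1)))
    (β X₂ X₃ : ℝ)
    (hβ : β = 4 * γ₂ * γ₃ * γ₄ * (γ₃ - s) / (s * γ₃ * γ₄ - γ₂) ^ 2)
    (hX₂ : X₂ = (s * γ₃ * γ₄ - γ₂) * (1 - Real.sqrt (1 - β)) / (2 * γ₂ * γ₃ * γ₄))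
    (hX₃ : X₃ = (s * γ₃ * γ₄ - γ₂) * (1 + Real.sqrt (1 - β)) / (2 * γ₂ * γ₃ * γ₄))
    (hgt : s * γ₃ * γ₄ > γ₂) (hsγ₃ : s < γ₃) (hβ1 : β < 1) :
    (∀ x ∈ Set.Ioo (0 : ℝ) X₂, F x < 0) ∧
    (∀ x ∈ Set.Ioo X₂ X₃, F x > 0) ∧
    (∀ x : ℝ, X₃ < x → F x < 0) := by
  have ha : 0 < γ₂ * γ₃ * γ₄ := by positivity
  have hb : 0 < s * γ₃ * γ₄ - γ₂ := by linarith
  have hc : 0 < γ₃ - s := by linarith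
  set r := Real.sqrt (1 - β) with hr_def
  have hrpos : 0 < r := Real.sqrt_pos.2 (by linarith)
  have hr2 : r ^ 2 = 1 - β := Real.sq_sqrt (by linarith)
  have hβpos : 0 < β := by rw [hβ]; positivity
  have hr1 : r < 1 := by nlinarith [Real.sqrt_nonneg (1 - β)]
  have hb2β : β * (s * γ₃ * γ₄ - γ₂) ^ 2 =
      4 * (γ₂ * γ₃ * γ₄) * (γ₃ - s) := by
    rw [hβ]; field_simp; exact div_self (ne_of_gt (by linarith))
  have hX2' : 2 * (γ₂ * γ₃ * γ₄) * X₂ = (s * γ₃ * γ₄ - γ₂) * (1 - r) := by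
    rw [hX₂]; field_simp
  have hX3' : 2 * (γ₂ * γ₃ * γ₄) * X₃ = (s * γ₃ * γ₄ - γ₂) * (1 + r) := by
    rw [hX₃]; field_simp
  have hprod4 : 4 * (γ₂ * γ₃ * γ₄) ^ 2 * (X₂ * X₃) =
      4 * (γ₂ * γ₃ * γ₄) * (γ₃ - s) := by
    linear_combination (2 * (γ₂ * γ₃ * γ₄) * X₃) * hX2'
      + ((s * γ₃ * γ₄ - γ₂) * (1 - r)) * hX3'
      - (s * γ₃ * γ₄ - γ₂) ^ 2 * hr2 + hb2β
  have hprod' : (γ₂ * γ₃ * γ₄) * (X₂ * X₃) = γ₃ - s := by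
    have h4a : (4 * (γ₂ * γ₃ * γ₄)) ≠ 0 := by positivity
    apply mul_left_cancel₀ h4a
    linear_combination hprod4
  have hsum' : 2 * (γ₂ * γ₃ * γ₄) * (X₂ + X₃) = 2 * (s * γ₃ * γ₄ - γ₂) := by
    linear_combination hX2' + hX3'
  have hNid : ∀ x : ℝ, (s - γ₂ * x) * (γ₃ * γ₄ * x + 1) - γ₃ =
      -((γ₂ * γ₃ * γ₄) * (x - X₂) * (x - X₃)) := by
    intro x
    linear_combination (-(x / 2)) * hsum' + hprod'
  have hX2pos : 0 < X₂ := by nlinarith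
  have hX23 : X₂ < X₃ := by nlinarith
  have hX3pos : 0 < X₃ := lt_trans hX2pos hX23
  refine ⟨?_, ?_, ?_⟩
  · rintro x ⟨hx0, hx2⟩
    rw [hF]
    have hD : 0 < γ₃ * γ₄ * x + 1 := by positivity
    apply mul_neg_of_pos_of_neg hx0
    have h1 : s - γ₂ * x < γ₃ / (γ₃ * γ₄ * x + 1) := by
      rw [lt_div_iff₀ hD]
      have hq : 0 < (γ₂ * γ₃ * γ₄) * ((X₂ - x) * (X₃ - x)) :=
        mul_pos ha (mul_pos (sub_pos.2 hx2) (sub_pos.2 (lt_trans hx2 hX23)))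
      nlinarith [hNid x, hq]
    linarith
  · rintro x ⟨hx2, hx3⟩
    rw [hF]
    have hx0 : 0 < x := lt_trans hX2pos hx2
    have hD : 0 < γ₃ * γ₄ * x + 1 := by positivity
    apply mul_pos hx0
    have h1 : γ₃ / (γ₃ * γ₄ * x + 1) < s - γ₂ * x := by
      rw [div_lt_iff₀ hD]
      have hq : 0 < (γ₂ * γ₃ * γ₄) * ((x - X₂) * (X₃ - x)) :=
        mul_pos ha (mul_pos (sub_pos.2 hx2) (sub_pos.2 hx3))
      nlinarith [hNid x, hq]
    linarith
  · intro x hx3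
    rw [hF]
    have hx0 : 0 < x := lt_trans hX3pos hx3
    have hD : 0 < γ₃ * γ₄ * x + 1 := by positivity
    apply mul_neg_of_pos_of_neg hx0
    have h1 : s - γ₂ * x < γ₃ / (γ₃ * γ₄ * x + 1) := by
      rw [lt_div_iff₀ hD]
      have hq : 0 < (γ₂ * γ₃ * γ₄) * ((x - X₂) * (x - X₃)) :=
        mul_pos ha (mul_pos (sub_pos.2 (lt_trans hX23 hx3)) (sub_pos.2 hx3))
      nlinarith [hNid x, hq]
    linarith
end

section
/- Assume s γ₃ γ₄ > γ₂, s < γ₃, and β < 1. Then F'(X₂) > 0 and F'(X₃) < 0; that is, the lower nontrivial equilibrium X₂ is linearly unstable and the upper equilibrium X₃ is linearly stable. -/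
lemma allee_hasDerivAt (s γ₂ γ₃ γ₄ x : ℝ) (hd : γ₃ * γ₄ * x + 1 ≠ 0) :
    HasDerivAt (fun x => x * (s - γ₂ * x - γ₃ / (γ₃ * γ₄ * x + 1)))
      (1 * (s - γ₂ * x - γ₃ / (γ₃ * γ₄ * x + 1)) +
        x * ((0 - γ₂ * 1) -
          (0 * (γ₃ * γ₄ * x + 1) - γ₃ * (γ₃ * γ₄ * 1)) / (γ₃ * γ₄ * x + 1) ^ 2)) x := by
  have h1 : HasDerivAt (fun x : ℝ => γ₃ * γ₄ * x + 1) (γ₃ * γ₄ * 1) x :=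
    ((hasDerivAt_id x).const_mul (γ₃ * γ₄)).add_const 1
  have h2 := (hasDerivAt_const x γ₃).div h1 hd
  have h3 : HasDerivAt (fun x : ℝ => s - γ₂ * x - γ₃ / (γ₃ * γ₄ * x + 1))
      ((0 - γ₂ * 1) - (0 * (γ₃ * γ₄ * x + 1) - γ₃ * (γ₃ * γ₄ * 1)) / (γ₃ * γ₄ * x + 1) ^ 2) x :=
    ((hasDerivAt_const x s).sub ((hasDerivAt_id x).const_mul γ₂)).sub h2
  exact (hasDerivAt_id x).mul h3

lemma allee_deriv_at_root (s γ₂ γ₃ γ₄ x : ℝ) (F : ℝ → ℝ)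
    (hF : ∀ x, F x = x * (s - γ₂ * x - γ₃ / (γ₃ * γ₄ * x + 1)))
    (hd : 0 < γ₃ * γ₄ * x + 1)
    (hroot : γ₂ * γ₃ * γ₄ * x ^ 2 - (s * γ₃ * γ₄ - γ₂) * x + (γ₃ - s) = 0) :
    deriv F x = x * ((s * γ₃ * γ₄ - γ₂) - 2 * (γ₂ * γ₃ * γ₄) * x) / (γ₃ * γ₄ * x + 1) := by
  have hd' : γ₃ * γ₄ * x + 1 ≠ 0 := ne_of_gt hd
  have hFe : F = fun x => x * (s - γ₂ * x - γ₃ / (γ₃ * γ₄ * x + 1)) := funext hF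
  rw [hFe, (allee_hasDerivAt s γ₂ γ₃ γ₄ x hd').deriv]
  rw [div_eq_mul_inv γ₃, div_eq_mul_inv _ ((γ₃ * γ₄ * x + 1) ^ 2), div_eq_mul_inv _ (γ₃ * γ₄ * x + 1), ← inv_pow]
  have hI : (γ₃ * γ₄ * x + 1) * (γ₃ * γ₄ * x + 1)⁻¹ = 1 := mul_inv_cancel₀ hd'
  linear_combination (-((γ₃ * γ₄ * x + 1)⁻¹) ^ 2) * hroot
    + ((γ₃ + γ₂ * x - s) * (γ₃ * γ₄ * x + 1)⁻¹ + 2 * γ₂ * x - s) * hI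

/-- Assume `s γ₃ γ₄ > γ₂`, `s < γ₃` and `β < 1`. Then `F'(X₂) > 0` and `F'(X₃) < 0`:
the lower nontrivial equilibrium `X₂` is linearly unstable and the upper equilibrium
`X₃` is linearly stable. -/
theorem linear_stability_of_equilibria
    (s γ₂ γ₃ γ₄ : ℝ) (hs : 0 < s) (h2 : 0 < γ₂) (h3 : 0 < γ₃) (h4 : 0 < γ₄)
    (F : ℝ → ℝ)
    (hF : ∀ x, F x = x * (s - γ₂ * x - γ₃ / (γ₃ * γ₄ * x + 1)))
    (β X₂ X₃ : ℝ)
    (hβ : β = 4 * γ₂ * γ₃ * γ₄ * (γ₃ - s) / (s * γ₃ * γ₄ - γ₂) ^ 2)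
    (hX₂ : X₂ = (s * γ₃ * γ₄ - γ₂) * (1 - Real.sqrt (1 - β)) / (2 * γ₂ * γ₃ * γ₄))
    (hX₃ : X₃ = (s * γ₃ * γ₄ - γ₂) * (1 + Real.sqrt (1 - β)) / (2 * γ₂ * γ₃ * γ₄))
    (hgt : s * γ₃ * γ₄ > γ₂) (hsγ₃ : s < γ₃) (hβ1 : β < 1) :
    deriv F X₂ > 0 ∧ deriv F X₃ < 0 := by
  set r := Real.sqrt (1 - β) with hr
  have hb : 0 < s * γ₃ * γ₄ - γ₂ := sub_pos.mpr hgt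
  have hc : 0 < γ₃ - s := sub_pos.mpr hsγ₃
  have hβpos : 0 < β := by rw [hβ]; positivity
  have h1β : 0 ≤ 1 - β := by linarith
  have hr2 : r ^ 2 = 1 - β := Real.sq_sqrt h1β
  have hrpos : 0 < r := Real.sqrt_pos.mpr (by linarith)
  have hr1 : r < 1 := by nlinarith [hr2]
  have ha : 0 < 2 * γ₂ * γ₃ * γ₄ := by positivity
  have ha' : (2 : ℝ) * γ₂ * γ₃ * γ₄ ≠ 0 := ne_of_gt ha
  have hX₂pos : 0 < X₂ := by rw [hX₂]; apply div_pos _ ha; nlinarith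
  have hX₃pos : 0 < X₃ := by rw [hX₃]; apply div_pos _ ha; nlinarith
  have hβeq : β * (s * γ₃ * γ₄ - γ₂) ^ 2 = 4 * γ₂ * γ₃ * γ₄ * (γ₃ - s) := by
    rw [hβ]; field_simp; exact div_self (ne_of_gt (by linarith))
  have h₂ : X₂ * (2 * γ₂ * γ₃ * γ₄) = (s * γ₃ * γ₄ - γ₂) * (1 - r) := by
    rw [hX₂]; field_simp
  have h₃ : X₃ * (2 * γ₂ * γ₃ * γ₄) = (s * γ₃ * γ₄ - γ₂) * (1 + r) := by
    rw [hX₃]; field_simp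
  have hroot₂ : γ₂ * γ₃ * γ₄ * X₂ ^ 2 - (s * γ₃ * γ₄ - γ₂) * X₂ + (γ₃ - s) = 0 := by
    have h0 : 4 * γ₂ * γ₃ * γ₄ *
        (γ₂ * γ₃ * γ₄ * X₂ ^ 2 - (s * γ₃ * γ₄ - γ₂) * X₂ + (γ₃ - s)) = 0 := by
      linear_combination (2 * γ₂ * γ₃ * γ₄ * X₂ + (s * γ₃ * γ₄ - γ₂) * (1 - r)
        - 2 * (s * γ₃ * γ₄ - γ₂)) * h₂ + (s * γ₃ * γ₄ - γ₂) ^ 2 * hr2 - hβeq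
    have h4a : (4 : ℝ) * γ₂ * γ₃ * γ₄ ≠ 0 := by positivity
    exact (mul_eq_zero.mp h0).resolve_left h4a
  have hroot₃ : γ₂ * γ₃ * γ₄ * X₃ ^ 2 - (s * γ₃ * γ₄ - γ₂) * X₃ + (γ₃ - s) = 0 := by
    have h0 : 4 * γ₂ * γ₃ * γ₄ *
        (γ₂ * γ₃ * γ₄ * X₃ ^ 2 - (s * γ₃ * γ₄ - γ₂) * X₃ + (γ₃ - s)) = 0 := by
      linear_combination (2 * γ₂ * γ₃ * γ₄ * X₃ + (s * γ₃ * γ₄ - γ₂) * (1 + r)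
        - 2 * (s * γ₃ * γ₄ - γ₂)) * h₃ + (s * γ₃ * γ₄ - γ₂) ^ 2 * hr2 - hβeq
    have h4a : (4 : ℝ) * γ₂ * γ₃ * γ₄ ≠ 0 := by positivity
    exact (mul_eq_zero.mp h0).resolve_left h4a
  have hd₂ : 0 < γ₃ * γ₄ * X₂ + 1 := by positivity
  have hd₃ : 0 < γ₃ * γ₄ * X₃ + 1 := by positivity
  constructor
  · rw [allee_deriv_at_root s γ₂ γ₃ γ₄ X₂ F hF hd₂ hroot₂]
    apply div_pos _ hd₂
    have hnum : X₂ * ((s * γ₃ * γ₄ - γ₂) - 2 * (γ₂ * γ₃ * γ₄) * X₂)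
        = X₂ * ((s * γ₃ * γ₄ - γ₂) * r) := by
      linear_combination (-X₂) * h₂
    rw [hnum]; positivity
  · rw [allee_deriv_at_root s γ₂ γ₃ γ₄ X₃ F hF hd₃ hroot₃]
    apply div_neg_of_neg_of_pos _ hd₃
    have hnum : X₃ * ((s * γ₃ * γ₄ - γ₂) - 2 * (γ₂ * γ₃ * γ₄) * X₃)
        = -(X₃ * ((s * γ₃ * γ₄ - γ₂) * r)) := by
      linear_combination (-X₃) * h₃
    rw [hnum]
    have : 0 < X₃ * ((s * γ₃ * γ₄ - γ₂) * r) := by positivity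
    linarith
end

section
/- Assume s γ₃ γ₄ > γ₂, s < γ₃, and β < 1. Then the potential U(x) = −s x²/2 + γ₂ x³/3 + (γ₃/(γ₃ γ₄)²)·(γ₃ γ₄ x + 1 − ln(γ₃ γ₄ x + 1)), restricted to x ≥ 0, has a local minimum at x = 0, a local maximum at x = X₂, and a local minimum at x = X₃. -/
/-- Assume `s γ₃ γ₄ > γ₂`, `s < γ₃` and `β < 1`. Then the potential
`U(x) = -s x²/2 + γ₂ x³/3 + (γ₃/(γ₃ γ₄)²)(γ₃ γ₄ x + 1 - ln(γ₃ γ₄ x + 1))`,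
restricted to `x ≥ 0`, has a local minimum at `x = 0`, a local maximum at `x = X₂`,
and a local minimum at `x = X₃`. -/
theorem potential_extrema
    (s γ₂ γ₃ γ₄ : ℝ) (hs : 0 < s) (h2 : 0 < γ₂) (h3 : 0 < γ₃) (h4 : 0 < γ₄)
    (U : ℝ → ℝ)
    (hU : ∀ x, U x = -(s * x ^ 2) / 2 + γ₂ * x ^ 3 / 3
      + (γ₃ / (γ₃ * γ₄) ^ 2) * (γ₃ * γ₄ * x + 1 - Real.log (γ₃ * γ₄ * x + 1)))
    (β X₂ X₃ : ℝ)
    (hβ : β = 4 * γ₂ * γ₃ * γ₄ * (γ₃ - s) / (s * γ₃ * γ₄ - γ₂) ^ 2)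
    (hX₂ : X₂ = (s * γ₃ * γ₄ - γ₂) * (1 - Real.sqrt (1 - β)) / (2 * γ₂ * γ₃ * γ₄))
    (hX₃ : X₃ = (s * γ₃ * γ₄ - γ₂) * (1 + Real.sqrt (1 - β)) / (2 * γ₂ * γ₃ * γ₄))
    (hgt : s * γ₃ * γ₄ > γ₂) (hsγ₃ : s < γ₃) (hβ1 : β < 1) :
    IsLocalMinOn U (Set.Ici (0 : ℝ)) 0 ∧
    IsLocalMaxOn U (Set.Ici (0 : ℝ)) X₂ ∧
    IsLocalMinOn U (Set.Ici (0 : ℝ)) X₃ := by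
  have hc : 0 < γ₃ * γ₄ := mul_pos h3 h4
  have hD : 0 < s * γ₃ * γ₄ - γ₂ := by linarith
  have hβ0 : 0 < β := by
    have h5 : 0 < γ₃ - s := by linarith
    rw [hβ]; apply div_pos (by positivity) (by positivity)
  set r := Real.sqrt (1 - β) with hr
  have hr2 : r ^ 2 = 1 - β := Real.sq_sqrt (by linarith)
  have hrpos : 0 < r := Real.sqrt_pos.mpr (by linarith)
  have hr1 : r < 1 := by nlinarith
  have hA : 0 < 2 * γ₂ * γ₃ * γ₄ := by positivity
  have hX2pos : 0 < X₂ := by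
    rw [hX₂]; apply div_pos _ hA; nlinarith
  have hX23 : X₂ < X₃ := by
    rw [hX₂, hX₃, div_lt_div_iff₀ hA hA]
    nlinarith [mul_pos (mul_pos hD hrpos) hA]
  -- key algebraic identity for the quadratic factor
  have hβ' : β * (s * γ₃ * γ₄ - γ₂) ^ 2 = 4 * γ₂ * γ₃ * γ₄ * (γ₃ - s) := by
    rw [hβ]; field_simp
    exact mul_div_cancel_right₀ _ (ne_of_gt (by linarith))
  have hq : ∀ x : ℝ, (γ₂ * x - s) * (γ₃ * γ₄ * x + 1) + γ₃
      = γ₂ * γ₃ * γ₄ * (x - X₂) * (x - X₃) := by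
    intro x
    rw [hX₂, hX₃]
    field_simp
    linear_combination ((s * γ₃ * γ₄ - γ₂) ^ 2) * hr2 - hβ'
  -- derivative of U
  have hder : ∀ x : ℝ, 0 ≤ x →
      HasDerivAt U (x * (γ₂ * γ₃ * γ₄ * (x - X₂) * (x - X₃)) / (γ₃ * γ₄ * x + 1)) x := by
    intro x hx
    have hx1 : 0 < γ₃ * γ₄ * x + 1 := by positivity
    have hUe : U = fun x => -(s * x ^ 2) / 2 + γ₂ * x ^ 3 / 3
      + (γ₃ / (γ₃ * γ₄) ^ 2) * (γ₃ * γ₄ * x + 1 - Real.log (γ₃ * γ₄ * x + 1)) := funext hU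
    rw [hUe]
    have h1 : HasDerivAt (fun y : ℝ => γ₃ * γ₄ * y + 1) (γ₃ * γ₄) x := by
      simpa using ((hasDerivAt_id x).const_mul (γ₃ * γ₄)).add_const 1
    have hlog : HasDerivAt (fun y : ℝ => Real.log (γ₃ * γ₄ * y + 1))
        (γ₃ * γ₄ / (γ₃ * γ₄ * x + 1)) x := h1.log hx1.ne'
    have hmain := ((((hasDerivAt_pow 2 x).const_mul s).neg.div_const 2).add
      (((hasDerivAt_pow 3 x).const_mul γ₂).div_const 3)).add
      ((h1.sub hlog).const_mul (γ₃ / (γ₃ * γ₄) ^ 2))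
    refine hmain.congr_deriv ?_
    rw [← hq x]
    field_simp
    ring
  -- strict monotonicity pieces
  have hcont : ∀ a b : ℝ, 0 ≤ a → ContinuousOn U (Set.Icc a b) := by
    intro a b ha
    intro x hx
    exact (hder x (le_trans ha hx.1)).continuousAt.continuousWithinAt
  have mono1 : StrictMonoOn U (Set.Icc 0 X₂) := by
    apply strictMonoOn_of_deriv_pos (convex_Icc _ _) (hcont 0 X₂ le_rfl)
    intro x hx
    rw [interior_Icc] at hx
    rw [(hder x hx.1.le).deriv]
    have h' : 0 < x * (γ₂ * γ₃ * γ₄) * (X₂ - x) * (X₃ - x) :=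
      mul_pos (mul_pos (mul_pos hx.1 (by positivity)) (sub_pos.mpr hx.2))
        (sub_pos.mpr (lt_trans hx.2 hX23))
    have heq : x * (γ₂ * γ₃ * γ₄ * (x - X₂) * (x - X₃)) = x * (γ₂ * γ₃ * γ₄) * (X₂ - x) * (X₃ - x) := by ring
    have hx1 : 0 < γ₃ * γ₄ * x + 1 := by nlinarith [mul_pos hc hx.1]
    exact div_pos (heq ▸ h') hx1
  have anti : StrictAntiOn U (Set.Icc X₂ X₃) := by
    apply strictAntiOn_of_deriv_neg (convex_Icc _ _) (hcont X₂ X₃ hX2pos.le)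
    intro x hx
    rw [interior_Icc] at hx
    rw [(hder x (le_trans hX2pos.le hx.1.le)).deriv]
    have hx0 : 0 < x := lt_trans hX2pos hx.1
    have hx1 : 0 < γ₃ * γ₄ * x + 1 := by positivity
    have h' : 0 < x * (γ₂ * γ₃ * γ₄) * (x - X₂) * (X₃ - x) :=
      mul_pos (mul_pos (mul_pos hx0 (by positivity)) (sub_pos.mpr hx.1))
        (sub_pos.mpr hx.2)
    have heq : x * (γ₂ * γ₃ * γ₄ * (x - X₂) * (x - X₃)) = -(x * (γ₂ * γ₃ * γ₄) * (x - X₂) * (X₃ - x)) := by ring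
    exact div_neg_of_neg_of_pos (heq ▸ neg_neg_iff_pos.mpr h') hx1
  have mono2 : StrictMonoOn U (Set.Icc X₃ (X₃ + 1)) := by
    apply strictMonoOn_of_deriv_pos (convex_Icc _ _) (hcont X₃ (X₃+1) (by linarith))
    intro x hx
    rw [interior_Icc] at hx
    have hx0 : 0 < x := by linarith [hx.1, hX2pos, hX23]
    rw [(hder x hx0.le).deriv]
    have h' : 0 < x * (γ₂ * γ₃ * γ₄) * (x - X₂) * (x - X₃) :=
      mul_pos (mul_pos (mul_pos hx0 (by positivity)) (sub_pos.mpr (lt_trans hX23 hx.1)))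
        (sub_pos.mpr hx.1)
    have heq : x * (γ₂ * γ₃ * γ₄ * (x - X₂) * (x - X₃)) = x * (γ₂ * γ₃ * γ₄) * (x - X₂) * (x - X₃) := by ring
    have hx1 : 0 < γ₃ * γ₄ * x + 1 := by nlinarith [mul_pos hc hx0]
    exact div_pos (heq ▸ h') hx1
  refine ⟨?_, ?_, ?_⟩
  · have hmem : Set.Ico (0:ℝ) X₂ ∈ nhdsWithin (0:ℝ) (Set.Ici 0) := by
      rw [show Set.Ico (0:ℝ) X₂ = Set.Ici 0 ∩ Set.Iio X₂ by rw [Set.Ici_inter_Iio]]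
      exact Filter.inter_mem self_mem_nhdsWithin
        (nhdsWithin_le_nhds (Iio_mem_nhds hX2pos))
    filter_upwards [hmem] with x hx
    exact mono1.monotoneOn ⟨le_rfl, hX2pos.le⟩ ⟨hx.1, hx.2.le⟩ hx.1
  · have hmem : Set.Ioo (0:ℝ) X₃ ∈ nhdsWithin X₂ (Set.Ici 0) :=
      nhdsWithin_le_nhds (Ioo_mem_nhds hX2pos hX23)
    filter_upwards [hmem] with x hx
    rcases le_total x X₂ with h | h
    · exact mono1.monotoneOn ⟨hx.1.le, h⟩ ⟨hX2pos.le, le_rfl⟩ h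
    · exact anti.antitoneOn ⟨le_rfl, hX23.le⟩ ⟨h, hx.2.le⟩ h
  · have hmem : Set.Ioo X₂ (X₃ + 1) ∈ nhdsWithin X₃ (Set.Ici 0) :=
      nhdsWithin_le_nhds (Ioo_mem_nhds hX23 (by linarith))
    filter_upwards [hmem] with x hx
    rcases le_total x X₃ with h | h
    · exact anti.antitoneOn ⟨hx.1.le, h⟩ ⟨hX23.le, le_rfl⟩ h
    · exact mono2.monotoneOn ⟨le_rfl, by linarith⟩ ⟨h, hx.2.le⟩ h
end

section
/- Assume s γ₃ γ₄ > γ₂, s < γ₃, and β < 1. Let X : ℝ → ℝ be differentiable with X'(t) = F(X(t)) for all t ≥ 0 and X(0) ∈ (X₂, X₃). Then X(t) ∈ (X₂, X₃) for all t ≥ 0, and X(t) → X₃ as t → ∞; that is, the upper equilibrium X₃ attracts all trajectories starting above the Allee threshold X₂ and below X₃. -/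
open Filter Topology

/-- Assume `s γ₃ γ₄ > γ₂`, `s < γ₃` and `β < 1`. If `X` is a solution of the
deterministic model `X' = F(X)` for `t ≥ 0` with `X(0) ∈ (X₂, X₃)`, then
`X(t) ∈ (X₂, X₃)` for all `t ≥ 0` and `X(t) → X₃` as `t → ∞`: the upper equilibrium
`X₃` attracts all trajectories starting above the Allee threshold `X₂` and below `X₃`. -/
theorem attraction_to_upper_equilibrium
    (s γ₂ γ₃ γ₄ : ℝ) (hs : 0 < s) (h2 : 0 < γ₂) (h3 : 0 < γ₃) (h4 : 0 < γ₄)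
    (F : ℝ → ℝ)
    (hF : ∀ x, F x = x * (s - γ₂ * x - γ₃ / (γ₃ * γ₄ * x + 1)))
    (β X₂ X₃ : ℝ)
    (hβ : β = 4 * γ₂ * γ₃ * γ₄ * (γ₃ - s) / (s * γ₃ * γ₄ - γ₂) ^ 2)
    (hX₂ : X₂ = (s * γ₃ * γ₄ - γ₂) * (1 - Real.sqrt (1 - β)) / (2 * γ₂ * γ₃ * γ₄))
    (hX₃ : X₃ = (s * γ₃ * γ₄ - γ₂) * (1 + Real.sqrt (1 - β)) / (2 * γ₂ * γ₃ * γ₄))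
    (hgt : s * γ₃ * γ₄ > γ₂) (hsγ₃ : s < γ₃) (hβ1 : β < 1)
    (X : ℝ → ℝ) (hXdiff : Differentiable ℝ X)
    (hODE : ∀ t : ℝ, 0 ≤ t → deriv X t = F (X t))
    (hX0 : X 0 ∈ Set.Ioo X₂ X₃) :
    (∀ t : ℝ, 0 ≤ t → X t ∈ Set.Ioo X₂ X₃) ∧
    Tendsto X atTop (𝓝 X₃) := by
  have hXcont : Continuous X := hXdiff.continuous
  have ha : 0 < s * γ₃ * γ₄ - γ₂ := sub_pos.2 hgt
  have hβpos : 0 < β := by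
    rw [hβ]; exact div_pos (mul_pos (by positivity) (by linarith)) (by positivity)
  set r := Real.sqrt (1 - β) with hr
  have hrpos : 0 < r := Real.sqrt_pos.2 (by linarith)
  have hrsq : r ^ 2 = 1 - β := Real.sq_sqrt (by linarith)
  have hrlt : r < 1 := by nlinarith [hrpos]
  have hr1 : 0 < 1 - r := by linarith
  have hX₂pos : 0 < X₂ := by
    rw [hX₂]; exact div_pos (mul_pos ha hr1) (by positivity)
  have hlt23 : X₂ < X₃ := by
    rw [hX₂, hX₃, div_lt_div_iff₀ (by positivity) (by positivity)]
    have : 0 < (s * γ₃ * γ₄ - γ₂) * r * (2 * γ₂ * γ₃ * γ₄) := by positivity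
    nlinarith [this]
  have hβ' : β * (s * γ₃ * γ₄ - γ₂) ^ 2 = 4 * γ₂ * γ₃ * γ₄ * (γ₃ - s) := by
    rw [hβ, div_mul_cancel₀ _ (pow_ne_zero 2 ha.ne')]
  have hsum : γ₂ * γ₃ * γ₄ * (X₂ + X₃) = s * γ₃ * γ₄ - γ₂ := by
    rw [hX₂, hX₃]; field_simp; ring
  have hprod : γ₂ * γ₃ * γ₄ * (X₂ * X₃) = γ₃ - s := by
    rw [hX₂, hX₃]; field_simp
    linear_combination (-((s * γ₃ * γ₄ - γ₂) ^ 2)) * hrsq + hβ'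
  -- factorized form of F
  have hfac : ∀ x : ℝ, γ₃ * γ₄ * x + 1 ≠ 0 →
      F x = x * (γ₂ * γ₃ * γ₄ * ((x - X₂) * (X₃ - x))) / (γ₃ * γ₄ * x + 1) := by
    intro x hx
    have hq : γ₂ * γ₃ * γ₄ * ((x - X₂) * (X₃ - x)) =
        (s - γ₂ * x) * (γ₃ * γ₄ * x + 1) - γ₃ := by
      linear_combination x * hsum - hprod
    rw [hF, hq, mul_div_assoc, sub_div, mul_div_cancel_right₀ _ hx]
  -- positivity of F on the open interval
  have hFpos : ∀ x ∈ Set.Ioo X₂ X₃, 0 < F x := by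
    intro x hx
    have hx0 : 0 < x := lt_trans hX₂pos hx.1
    have hden : 0 < γ₃ * γ₄ * x + 1 := by positivity
    rw [hfac x hden.ne']
    have h1 : 0 < x - X₂ := sub_pos.2 hx.1
    have h2' : 0 < X₃ - x := sub_pos.2 hx.2
    positivity
  -- linear upper bound for F near X₃
  set L : ℝ := γ₂ * γ₃ * γ₄ * X₃ * (X₃ - X₂) with hL
  have hLpos : 0 < L := by
    have : 0 < X₃ := lt_trans hX₂pos hlt23
    have : 0 < X₃ - X₂ := sub_pos.2 hlt23
    positivity
  have hFbound : ∀ x ∈ Set.Icc X₂ X₃, F x ≤ L * (X₃ - x) := by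
    intro x hx
    have hx0 : 0 < x := lt_of_lt_of_le hX₂pos hx.1
    have hden : (1:ℝ) ≤ γ₃ * γ₄ * x + 1 := by nlinarith
    have hden0 : 0 < γ₃ * γ₄ * x + 1 := by positivity
    rw [hfac x hden0.ne']
    have hnum : 0 ≤ x * (γ₂ * γ₃ * γ₄ * ((x - X₂) * (X₃ - x))) := by
      have h1 : 0 ≤ x - X₂ := sub_nonneg.2 hx.1
      have h2' : 0 ≤ X₃ - x := sub_nonneg.2 hx.2
      positivity
    calc x * (γ₂ * γ₃ * γ₄ * ((x - X₂) * (X₃ - x))) / (γ₃ * γ₄ * x + 1)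
        ≤ x * (γ₂ * γ₃ * γ₄ * ((x - X₂) * (X₃ - x))) := div_le_self hnum hden
      _ ≤ L * (X₃ - x) := by
          rw [hL]
          have h1 : 0 ≤ x - X₂ := sub_nonneg.2 hx.1
          have h2' : 0 ≤ X₃ - x := sub_nonneg.2 hx.2
          have h3' : x ≤ X₃ := hx.2
          have hX₃0 : (0:ℝ) ≤ X₃ := le_of_lt (lt_trans hX₂pos hlt23)
          have hxx : x * (x - X₂) ≤ X₃ * (X₃ - X₂) :=
            mul_le_mul h3' (by linarith) h1 hX₃0
          have hmul := mul_le_mul_of_nonneg_right hxx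
            (mul_nonneg (by positivity : (0:ℝ) ≤ γ₂ * γ₃ * γ₄) h2')
          linear_combination hmul
  -- invariance
  have hinv : ∀ t : ℝ, 0 ≤ t → X t ∈ Set.Ioo X₂ X₃ := by
    by_contra hbad
    push_neg at hbad
    obtain ⟨t₁, ht₁0, ht₁⟩ := hbad
    set B : Set ℝ := {t | 0 ≤ t ∧ X t ∉ Set.Ioo X₂ X₃} with hB
    have hBne : B.Nonempty := ⟨t₁, ht₁0, ht₁⟩
    have hBbdd : BddBelow B := ⟨0, fun t ht => ht.1⟩
    have hBclosed : IsClosed B := by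
      have : B = Set.Ici 0 ∩ X ⁻¹' (Set.Ioo X₂ X₃)ᶜ := by
        ext t
        simp only [hB, Set.mem_setOf_eq, Set.mem_inter_iff, Set.mem_Ici,
          Set.mem_preimage, Set.mem_compl_iff]
      rw [this]
      exact isClosed_Ici.inter (isOpen_Ioo.isClosed_compl.preimage hXcont)
    set τ := sInf B with hτ
    have hτB : τ ∈ B := hBclosed.csInf_mem hBne hBbdd
    have hτ0 : 0 ≤ τ := hτB.1
    have hbefore : ∀ u, 0 ≤ u → u < τ → X u ∈ Set.Ioo X₂ X₃ := by
      intro u hu0 huτ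
      by_contra hu
      exact absurd (csInf_le hBbdd ⟨hu0, hu⟩) (not_le.2 huτ)
    have hτpos : 0 < τ := by
      rcases lt_or_eq_of_le hτ0 with h | h
      · exact h
      · exact absurd hX0 (h ▸ hτB.2)
    have hmono : StrictMonoOn X (Set.Icc 0 τ) := by
      apply strictMonoOn_of_deriv_pos (convex_Icc 0 τ) (hXcont.continuousOn)
      intro u hu
      rw [interior_Icc] at hu
      rw [hODE u hu.1.le]
      exact hFpos _ (hbefore u hu.1.le hu.2)
    have hXτle : X τ ≤ X₃ := by
      have hne : (𝓝[Set.Ioo 0 τ] τ).NeBot := right_nhdsWithin_Ioo_neBot hτpos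
      have htd : Tendsto X (𝓝[Set.Ioo 0 τ] τ) (𝓝 (X τ)) := hXcont.continuousWithinAt
      apply le_of_tendsto htd
      filter_upwards [self_mem_nhdsWithin] with u hu
      exact (hbefore u hu.1.le hu.2).2.le
    have hXτgt : X₂ < X τ := by
      have h01 : X 0 < X τ :=
        hmono (Set.left_mem_Icc.2 hτ0) (Set.right_mem_Icc.2 hτ0) hτpos
      exact lt_trans hX0.1 h01
    have hXτ : X τ = X₃ := by
      rcases eq_or_lt_of_le hXτle with h | h
      · exact h
      · exact absurd ⟨hXτgt, h⟩ hτB.2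
    -- Gronwall-type contradiction
    set g : ℝ → ℝ := fun t => (X₃ - X t) * Real.exp (L * t) with hg
    have hgderiv : ∀ t : ℝ, HasDerivAt g
        ((L * (X₃ - X t) - deriv X t) * Real.exp (L * t)) t := by
      intro t
      have h1 : HasDerivAt X (deriv X t) t := (hXdiff t).hasDerivAt
      have h2 : HasDerivAt (fun t => L * t) L t := by
        simpa using (hasDerivAt_id t).const_mul L
      have h3 : HasDerivAt (fun t => Real.exp (L * t)) (Real.exp (L * t) * L) t :=
        (Real.hasDerivAt_exp (L * t)).comp t h2
      have h4 := ((hasDerivAt_const t X₃).sub h1).mul h3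
      refine h4.congr_deriv ?_; simp only [Pi.sub_apply]; ring
    have hgcont : Continuous g := by
      apply (continuous_const.sub hXcont).mul
      exact Real.continuous_exp.comp (continuous_const.mul continuous_id)
    have hgmono : MonotoneOn g (Set.Icc 0 τ) := by
      apply monotoneOn_of_deriv_nonneg (convex_Icc 0 τ) hgcont.continuousOn
        (fun t ht => (hgderiv t).differentiableAt.differentiableWithinAt)
      intro t ht
      rw [interior_Icc] at ht
      rw [(hgderiv t).deriv]
      have hXt := hbefore t ht.1.le ht.2
      have hb := hFbound (X t) ⟨hXt.1.le, hXt.2.le⟩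
      rw [hODE t ht.1.le]
      have : 0 ≤ L * (X₃ - X t) - F (X t) := by linarith
      positivity
    have h0τ : g 0 ≤ g τ :=
      hgmono (Set.left_mem_Icc.2 hτ0) (Set.right_mem_Icc.2 hτ0) hτ0
    have hg0 : 0 < g 0 := by
      simp only [hg]
      have : 0 < X₃ - X 0 := sub_pos.2 hX0.2
      positivity
    have hgτ : g τ = 0 := by simp [hg, hXτ]
    linarith
  refine ⟨hinv, ?_⟩
  -- global monotonicity on [0, ∞)
  have hmono : StrictMonoOn X (Set.Ici 0) := by
    apply strictMonoOn_of_deriv_pos (convex_Ici 0) hXcont.continuousOn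
    intro u hu
    rw [interior_Ici] at hu
    rw [hODE u hu.le]
    exact hFpos _ (hinv u hu.le)
  set Y : ℝ → ℝ := fun t => X (max t 0) with hY
  have hYmono : Monotone Y := fun a b hab =>
    hmono.monotoneOn (le_max_right a 0) (le_max_right b 0) (max_le_max hab le_rfl)
  have hYbdd : BddAbove (Set.range Y) := by
    refine ⟨X₃, ?_⟩
    rintro y ⟨t, rfl⟩
    exact (hinv _ (le_max_right t 0)).2.le
  set l : ℝ := ⨆ t, Y t with hl
  have hYtend : Tendsto Y atTop (𝓝 l) := tendsto_atTop_ciSup hYmono hYbdd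
  have hXY : X =ᶠ[atTop] Y := by
    filter_upwards [eventually_ge_atTop (0:ℝ)] with t ht
    simp [hY, max_eq_left ht]
  have hXtend : Tendsto X atTop (𝓝 l) := hYtend.congr' hXY.symm
  have hlle : l ≤ X₃ := ciSup_le fun t => (hinv _ (le_max_right t 0)).2.le
  have hlge : ∀ t : ℝ, Y t ≤ l := fun t => le_ciSup hYbdd t
  have hl2 : X₂ < l := by
    have h0 : Y 0 = X 0 := by simp [hY]
    have := hlge 0
    rw [h0] at this
    linarith [hX0.1]
  have hleq : l = X₃ := by
    by_contra hne
    have hlt : l < X₃ := lt_of_le_of_ne hlle hne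
    have hFl : 0 < F l := hFpos l ⟨hl2, hlt⟩
    have hl0 : 0 < l := lt_trans hX₂pos hl2
    have hFcont : ContinuousAt F l := by
      have : ContinuousAt (fun x => x * (s - γ₂ * x - γ₃ / (γ₃ * γ₄ * x + 1))) l := by
        apply ContinuousAt.mul continuousAt_id
        apply ContinuousAt.sub (ContinuousAt.sub (continuousAt_const) (by fun_prop))
        exact ContinuousAt.div continuousAt_const (by fun_prop) (by positivity)
      exact this.congr (by filter_upwards with x; rw [hF x])
    have hFXtend : Tendsto (fun t => F (X t)) atTop (𝓝 (F l)) :=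
      hFcont.tendsto.comp hXtend
    have hev : ∀ᶠ t in atTop, F l / 2 ≤ F (X t) := by
      exact hFXtend.eventually_const_le (by linarith : F l / 2 < F l)
    obtain ⟨t₀, ht₀⟩ := (hev.and (eventually_ge_atTop (0:ℝ))).exists_forall_of_atTop
    set c := F l / 2 with hc
    have hcpos : 0 < c := by positivity
    have hZd : ∀ t : ℝ, HasDerivAt (fun t => X t - c * t) (deriv X t - c) t := by
      intro t
      have h1 : HasDerivAt X (deriv X t) t := (hXdiff t).hasDerivAt
      have h2 : HasDerivAt (fun t : ℝ => c * t) c t := by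
        simpa using (hasDerivAt_id t).const_mul c
      exact h1.sub h2
    have hZcont : Continuous (fun t : ℝ => X t - c * t) := by fun_prop
    have hZmono : MonotoneOn (fun t => X t - c * t) (Set.Ici t₀) := by
      apply monotoneOn_of_deriv_nonneg (convex_Ici t₀) hZcont.continuousOn
        (fun t ht => (hZd t).differentiableAt.differentiableWithinAt)
      intro t ht
      rw [interior_Ici] at ht
      have ht0 : 0 ≤ t := le_trans (ht₀ t₀ le_rfl).2 ht.le
      rw [(hZd t).deriv, hODE t ht0]
      have := (ht₀ t ht.le).1
      linarith
    -- derive a contradiction: X grows without bound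
    obtain ⟨T, hT⟩ : ∃ T : ℝ, T = t₀ + (X₃ - X t₀) / c + 1 := ⟨_, rfl⟩
    have hd0 : 0 ≤ (X₃ - X t₀) / c := by
      apply div_nonneg _ hcpos.le
      have := (hinv t₀ (ht₀ t₀ le_rfl).2).2
      linarith
    have hTge : t₀ ≤ T := by rw [hT]; linarith
    have hZle := hZmono (Set.mem_Ici.2 le_rfl) (Set.mem_Ici.2 hTge) hTge
    simp only at hZle
    have hXT : X T < X₃ := (hinv T (le_trans (ht₀ t₀ le_rfl).2 hTge)).2
    have hcT : c * T - c * t₀ = (X₃ - X t₀) + c := by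
      rw [hT]
      have : c ≠ 0 := hcpos.ne'
      field_simp
      ring
    linarith [hZle, hXT, hcT, hcpos]
  rw [← hleq]
  exact hXtend
end

section
/- Assume s γ₃ γ₄ > γ₂, s < γ₃, and β < 1. Let X : ℝ → ℝ be differentiable with X'(t) = F(X(t)) for all t ≥ 0 and X(0) ∈ (0, X₂). Then X(t) ∈ (0, X₂) for all t ≥ 0, and X(t) → 0 as t → ∞; that is, populations starting below the Allee threshold X₂ go extinct. -/
set_option maxHeartbeats 1000000


open Filter Topology

lemma quad_pos_aux (a b c r x X₂ : ℝ) (ha : 0 < a) (hb : 0 < b) (hc : 0 < c)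
    (hr : 0 < r) (hr2 : b ^ 2 * r ^ 2 = b ^ 2 - 4 * a * c)
    (hX₂ : X₂ = b * (1 - r) / (2 * a))
    (hx0 : 0 < x) (hx : x < X₂) : 0 < a * x ^ 2 - b * x + c := by
  have hq : a * X₂ ^ 2 - b * X₂ + c = 0 := by
    rw [hX₂]; field_simp
    nlinarith [hr2]
  have hlin : 0 < b - a * (x + X₂) := by
    have h2 : 2 * a * X₂ = b * (1 - r) := by rw [hX₂]; field_simp
    nlinarith [mul_pos hb hr]
  nlinarith [hq, mul_pos (sub_pos.2 hx) hlin]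

/-- Assume `s γ₃ γ₄ > γ₂`, `s < γ₃` and `β < 1`. If `X` is a solution of the
deterministic model `X' = F(X)` for `t ≥ 0` with `X(0) ∈ (0, X₂)`, then
`X(t) ∈ (0, X₂)` for all `t ≥ 0` and `X(t) → 0` as `t → ∞`: populations starting below
the Allee threshold `X₂` go extinct. -/
theorem extinction_below_threshold
    (s γ₂ γ₃ γ₄ : ℝ) (hs : 0 < s) (h2 : 0 < γ₂) (h3 : 0 < γ₃) (h4 : 0 < γ₄)
    (F : ℝ → ℝ)
    (hF : ∀ x, F x = x * (s - γ₂ * x - γ₃ / (γ₃ * γ₄ * x + 1)))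
    (β X₂ : ℝ)
    (hβ : β = 4 * γ₂ * γ₃ * γ₄ * (γ₃ - s) / (s * γ₃ * γ₄ - γ₂) ^ 2)
    (hX₂ : X₂ = (s * γ₃ * γ₄ - γ₂) * (1 - Real.sqrt (1 - β)) / (2 * γ₂ * γ₃ * γ₄))
    (hgt : s * γ₃ * γ₄ > γ₂) (hsγ₃ : s < γ₃) (hβ1 : β < 1)
    (X : ℝ → ℝ) (hXdiff : Differentiable ℝ X)
    (hODE : ∀ t : ℝ, 0 ≤ t → deriv X t = F (X t))
    (hX0 : X 0 ∈ Set.Ioo 0 X₂) :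
    (∀ t : ℝ, 0 ≤ t → X t ∈ Set.Ioo 0 X₂) ∧
    Tendsto X atTop (𝓝 0) := by
  obtain ⟨hX00, hX0lt⟩ := hX0
  have hX₂pos : 0 < X₂ := hX00.trans hX0lt
  have hb : 0 < s * γ₃ * γ₄ - γ₂ := sub_pos.2 hgt
  have hc : 0 < γ₃ - s := sub_pos.2 hsγ₃
  have ha : 0 < γ₂ * γ₃ * γ₄ := by positivity
  have hβpos : 0 < β := by rw [hβ]; positivity
  have h1β : 0 < 1 - β := by linarith
  have hr : 0 < Real.sqrt (1 - β) := Real.sqrt_pos.2 h1β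
  have hr2 : (s * γ₃ * γ₄ - γ₂) ^ 2 * Real.sqrt (1 - β) ^ 2
      = (s * γ₃ * γ₄ - γ₂) ^ 2 - 4 * (γ₂ * γ₃ * γ₄) * (γ₃ - s) := by
    rw [Real.sq_sqrt h1β.le]
    have hb2 : β * (s * γ₃ * γ₄ - γ₂) ^ 2 = 4 * (γ₂ * γ₃ * γ₄) * (γ₃ - s) := by
      rw [hβ, div_mul_cancel₀ _ (pow_ne_zero 2 hb.ne')]; ring
    nlinarith [hb2]
  have hX₂' : X₂ = (s * γ₃ * γ₄ - γ₂) * (1 - Real.sqrt (1 - β)) / (2 * (γ₂ * γ₃ * γ₄)) := by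
    rw [hX₂]; ring_nf
  -- F is negative on (0, X₂)
  have hFneg : ∀ x ∈ Set.Ioo (0 : ℝ) X₂, F x < 0 := by
    rintro x ⟨hx0, hxlt⟩
    have key := quad_pos_aux (γ₂ * γ₃ * γ₄) (s * γ₃ * γ₄ - γ₂) (γ₃ - s)
      (Real.sqrt (1 - β)) x X₂ ha hb hc hr hr2 hX₂' hx0 hxlt
    have hD : 0 < γ₃ * γ₄ * x + 1 := by positivity
    have hlt : s - γ₂ * x < γ₃ / (γ₃ * γ₄ * x + 1) := by
      rw [lt_div_iff₀ hD]; nlinarith [key]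
    rw [hF]
    exact mul_neg_of_pos_of_neg hx0 (by linarith)
  -- lower bound F x ≥ -(γ₂ X₂ + γ₃) x on (0, X₂)
  have hFlow : ∀ x ∈ Set.Ioo (0 : ℝ) X₂, -((γ₂ * X₂ + γ₃) * x) ≤ F x := by
    rintro x ⟨hx0, hxlt⟩
    have hD : (1 : ℝ) ≤ γ₃ * γ₄ * x + 1 := by nlinarith
    have hdle : γ₃ / (γ₃ * γ₄ * x + 1) ≤ γ₃ := by
      rw [div_le_iff₀ (by linarith)]; nlinarith
    have h1 : 0 ≤ s - γ₂ * x - γ₃ / (γ₃ * γ₄ * x + 1) + (γ₂ * X₂ + γ₃) := by nlinarith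
    rw [hF]
    nlinarith [mul_nonneg hx0.le h1]
  -- Invariance of (0, X₂)
  have hinv : ∀ t : ℝ, 0 ≤ t → X t ∈ Set.Ioo 0 X₂ := by
    by_contra h
    push_neg at h
    obtain ⟨t₁, ht₁0, ht₁⟩ := h
    set S := {t : ℝ | 0 ≤ t ∧ X t ∉ Set.Ioo 0 X₂} with hS
    have hSne : S.Nonempty := ⟨t₁, ht₁0, ht₁⟩
    have hSbdd : BddBelow S := ⟨0, fun t ht => ht.1⟩
    have hScl : IsClosed S := by
      have hSeq : S = Set.Ici 0 ∩ X ⁻¹' (Set.Ioo 0 X₂)ᶜ := by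
        ext t; simp [hS, Set.mem_Ici]
      rw [hSeq]
      exact isClosed_Ici.inter
        ((isClosed_compl_iff.2 isOpen_Ioo).preimage hXdiff.continuous)
    set t₀ := sInf S with ht₀
    have ht₀S : t₀ ∈ S := hScl.csInf_mem hSne hSbdd
    have ht₀pos : 0 < t₀ := by
      rcases eq_or_lt_of_le ht₀S.1 with hE | hE
      · exfalso
        have h0S : (0 : ℝ) ∈ S := hE ▸ ht₀S
        exact h0S.2 ⟨hX00, hX0lt⟩
      · exact hE
    have hmem : ∀ t : ℝ, 0 ≤ t → t < t₀ → X t ∈ Set.Ioo 0 X₂ := by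
      intro t ht htlt
      by_contra hmem
      exact absurd (csInf_le hSbdd ⟨ht, hmem⟩) (not_le.2 htlt)
    have hant : AntitoneOn X (Set.Icc 0 t₀) := by
      apply antitoneOn_of_deriv_nonpos (convex_Icc 0 t₀)
        hXdiff.continuous.continuousOn hXdiff.differentiableOn
      intro x hx
      rw [interior_Icc] at hx
      rw [hODE x hx.1.le]
      exact (hFneg _ (hmem x hx.1.le hx.2)).le
    set K := γ₂ * X₂ + γ₃ with hK
    have hmono : MonotoneOn (fun t => X t * Real.exp (K * t)) (Set.Icc 0 t₀) := by
      apply monotoneOn_of_deriv_nonneg (convex_Icc 0 t₀)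
        (by have := hXdiff.continuous; fun_prop : Continuous fun t => X t * Real.exp (K * t)).continuousOn
        (by fun_prop : Differentiable ℝ fun t => X t * Real.exp (K * t)).differentiableOn
      intro x hx
      rw [interior_Icc] at hx
      have hd : HasDerivAt (fun t => X t * Real.exp (K * t))
          (deriv X x * Real.exp (K * x) + X x * (Real.exp (K * x) * (K * 1))) x :=
        (hXdiff x).hasDerivAt.mul ((hasDerivAt_id x).const_mul K).exp
      rw [hd.deriv, hODE x hx.1.le]
      have hXx := hmem x hx.1.le hx.2
      have h1 := hFlow (X x) hXx
      have h3 := Real.exp_pos (K * x)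
      nlinarith [mul_nonneg (by linarith : (0:ℝ) ≤ F (X x) + K * X x) h3.le]
    have h1 : X 0 * Real.exp (K * 0) ≤ X t₀ * Real.exp (K * t₀) :=
      hmono ⟨le_refl 0, ht₀pos.le⟩ ⟨ht₀pos.le, le_refl t₀⟩ ht₀pos.le
    have hpos : 0 < X t₀ := by
      have h3 := Real.exp_pos (K * t₀)
      simp only [mul_zero, Real.exp_zero, mul_one] at h1
      nlinarith
    have hle : X t₀ ≤ X 0 := hant ⟨le_refl 0, ht₀pos.le⟩ ⟨ht₀pos.le, le_refl t₀⟩ ht₀pos.le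
    exact ht₀S.2 ⟨hpos, lt_of_le_of_lt hle hX0lt⟩
  refine ⟨hinv, ?_⟩
  -- X is antitone on [0, ∞)
  have hant : AntitoneOn X (Set.Ici 0) := by
    apply antitoneOn_of_deriv_nonpos (convex_Ici 0)
      hXdiff.continuous.continuousOn hXdiff.differentiableOn
    intro x hx
    rw [interior_Ici] at hx
    rw [hODE x hx.le]
    exact (hFneg _ (hinv x hx.le)).le
  set g : ℝ → ℝ := fun t => X (max t 0) with hg
  have hgant : Antitone g := fun t1 t2 h =>
    hant (Set.mem_Ici.2 (le_max_right t1 0)) (Set.mem_Ici.2 (le_max_right t2 0))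
      (max_le_max h (le_refl 0))
  have hgpos : ∀ t, 0 < g t := fun t => (hinv _ (le_max_right t 0)).1
  have hbdd : BddBelow (Set.range g) := ⟨0, by rintro _ ⟨t, rfl⟩; exact (hgpos t).le⟩
  have hlim : Tendsto g atTop (𝓝 (⨅ t, g t)) := tendsto_atTop_ciInf hgant hbdd
  set L := ⨅ t, g t with hL'
  have hL0 : 0 ≤ L := le_ciInf fun t => (hgpos t).le
  have hgeq : g =ᶠ[atTop] X := by
    filter_upwards [eventually_ge_atTop (0 : ℝ)] with t ht
    simp [hg, max_eq_left ht]
  have hXlim : Tendsto X atTop (𝓝 L) := hlim.congr' hgeq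
  have hLzero : L = 0 := by
    by_contra hL
    have hLpos : 0 < L := hL0.lt_of_ne (Ne.symm hL)
    have hLle : L ≤ X 0 := by
      have := ciInf_le hbdd (0 : ℝ)
      simpa [hg] using this
    have hmemI : ∀ t : ℝ, 0 ≤ t → X t ∈ Set.Icc L (X 0) := by
      intro t ht
      constructor
      · have := ciInf_le hbdd t
        simpa [hg, max_eq_left ht] using this
      · exact hant (Set.mem_Ici.2 (le_refl 0)) (Set.mem_Ici.2 ht) ht
    have hFc : ContinuousOn F (Set.Icc L (X 0)) := by
      have hFeq : F = fun x => x * (s - γ₂ * x - γ₃ / (γ₃ * γ₄ * x + 1)) := funext hF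
      rw [hFeq]
      apply ContinuousOn.mul continuousOn_id
      apply ContinuousOn.sub
        (continuousOn_const.sub (continuousOn_const.mul continuousOn_id))
      apply ContinuousOn.div continuousOn_const (by fun_prop)
      intro x hx
      have hx0 : 0 < x := lt_of_lt_of_le hLpos hx.1
      positivity
    obtain ⟨x₀, hx₀mem, hx₀max⟩ :=
      isCompact_Icc.exists_isMaxOn (Set.nonempty_Icc.2 hLle) hFc
    have hM : F x₀ < 0 :=
      hFneg x₀ ⟨lt_of_lt_of_le hLpos hx₀mem.1, lt_of_le_of_lt hx₀mem.2 hX0lt⟩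
    have hant2 : AntitoneOn (fun t => X t - F x₀ * t) (Set.Ici 0) := by
      apply antitoneOn_of_deriv_nonpos (convex_Ici 0)
        (by have := hXdiff.continuous; fun_prop : Continuous fun t => X t - F x₀ * t).continuousOn
        (by fun_prop : Differentiable ℝ fun t => X t - F x₀ * t).differentiableOn
      intro x hx
      rw [interior_Ici] at hx
      have hd : HasDerivAt (fun t => X t - F x₀ * t) (deriv X x - F x₀ * 1) x :=
        (hXdiff x).hasDerivAt.sub ((hasDerivAt_id x).const_mul (F x₀))
      rw [hd.deriv, hODE x hx.le]
      have h8 : F (X x) ≤ F x₀ := hx₀max (hmemI x hx.le)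
      linarith [h8]
    set T := X 0 / (-F x₀) + 1 with hT'
    have hTpos : 0 < T := by
      rw [hT']
      have : 0 < X 0 / (-F x₀) := div_pos hX00 (by linarith)
      linarith
    have h5 : X T - F x₀ * T ≤ X 0 - F x₀ * 0 :=
      hant2 (Set.mem_Ici.2 (le_refl 0)) (Set.mem_Ici.2 hTpos.le) hTpos.le
    have h6 : 0 < X T := (hinv T hTpos.le).1
    have h7 : F x₀ * T = -X 0 + F x₀ := by
      rw [hT']
      have hne : F x₀ ≠ 0 := hM.ne
      field_simp [hne]
    linarith [h5, h6, h7, hM]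
  rw [hLzero] at hXlim
  exact hXlim
end
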